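/- For every integer p ≥ 2 there exist simple graphs G and H, each on 3p + 4 vertices, such that: G is isomorphic to the disjoint union K_{1,p+1} ⊔ K_{1,p+1} ⊔ K_{1,p−1} and H is isomorphic to the disjoint union K_{1,p+1} ⊔ K_{1,p} ⊔ K_{1,p}; G and H have the same number of edges, e(G) = e(H) = 3p + 1; the degree sequences of G and H are different (G has two vertices of degree p + 1 while H has exactly one); and G and H share at least 2p common cards. -/

import Mathlib

open SimpleGraph

/-- The degree of a vertex, as the cardinality of its neighbour set. -/
noncomputable def gdeg {V : Type} (G : SimpleGraph V) (v : V) : ℕ :=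
  (G.neighborSet v).ncard

/-- The number of edges of a graph. -/
noncomputable def ecount {V : Type} (G : SimpleGraph V) : ℕ :=
  G.edgeSet.ncard

/-- The card `G - v`: the induced subgraph on the complement of `v`. -/
def gcard {V : Type} (G : SimpleGraph V) (v : V) : SimpleGraph {w : V // w ≠ v} :=
  G.induce {w : V | w ≠ v}

/-- The number of vertices of degree exactly `t`. -/
noncomputable def dcount {V : Type} (G : SimpleGraph V) (t : ℕ) : ℕ :=
  {v : V | gdeg G v = t}.ncard

/-- `G` and `H` share at least `m` common cards: there are `m` vertices of `G`,
injectively matched with vertices of `H`, whose cards are pairwise isomorphic. -/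
def SharesCards {n : ℕ} (G H : SimpleGraph (Fin n)) (m : ℕ) : Prop :=
  ∃ (S : Finset (Fin n)) (f : Fin n → Fin n),
    m ≤ S.card ∧ Set.InjOn f ↑S ∧
    ∀ v ∈ S, Nonempty (gcard G v ≃g gcard H (f v))

/-- The star `K_{1,q}` with one centre and `q` leaves. -/
def star' (q : ℕ) : SimpleGraph (Fin 1 ⊕ Fin q) := completeBipartiteGraph (Fin 1) (Fin q)

/-! ### Auxiliary lemmas -/

lemma gdeg_iso {V W : Type} {G : SimpleGraph V} {H : SimpleGraph W} (φ : G ≃g H) (v : V) :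
    gdeg G v = gdeg H (φ v) := by
  unfold gdeg
  rw [← Nat.card_coe_set_eq, ← Nat.card_coe_set_eq]
  exact Nat.card_congr (φ.mapNeighborSet v)

def isoGcard {V W : Type} {G : SimpleGraph V} {H : SimpleGraph W} (φ : G ≃g H) (v : V) :
    gcard G v ≃g gcard H (φ v) where
  toEquiv := Equiv.subtypeEquiv φ.toEquiv (fun w => by
    constructor
    · intro h hw; exact h (φ.toEquiv.injective hw)
    · intro h hw; subst hw; exact h rfl)
  map_rel_iff' := by
    rintro ⟨u, hu⟩ ⟨w, hw⟩
    simp [gcard, φ.map_adj_iff]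

lemma gdeg_sum_inl {α β : Type} (G : SimpleGraph α) (H : SimpleGraph β) (a : α) :
    gdeg (G ⊕g H) (Sum.inl a) = gdeg G a := by
  unfold gdeg
  have : (G ⊕g H).neighborSet (Sum.inl a) = Sum.inl '' G.neighborSet a := by
    ext x; cases x <;> simp [neighborSet]
  rw [this, Set.ncard_image_of_injective _ Sum.inl_injective]

lemma gdeg_sum_inr {α β : Type} (G : SimpleGraph α) (H : SimpleGraph β) (b : β) :
    gdeg (G ⊕g H) (Sum.inr b) = gdeg H b := by
  unfold gdeg
  have : (G ⊕g H).neighborSet (Sum.inr b) = Sum.inr '' H.neighborSet b := by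
    ext x; cases x <;> simp [neighborSet]
  rw [this, Set.ncard_image_of_injective _ Sum.inr_injective]

lemma gdeg_star_center (q : ℕ) (c : Fin 1) : gdeg (star' q) (Sum.inl c) = q := by
  unfold gdeg
  have : (star' q).neighborSet (Sum.inl c) = Set.range Sum.inr := by
    ext x; cases x <;> simp [star', neighborSet, completeBipartiteGraph]
  rw [this, ← Nat.card_coe_set_eq, Nat.card_congr (Equiv.ofInjective _ Sum.inr_injective).symm]
  simp

lemma gdeg_star_leaf (q : ℕ) (j : Fin q) : gdeg (star' q) (Sum.inr j) = 1 := by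
  unfold gdeg
  have : (star' q).neighborSet (Sum.inr j) = Set.range Sum.inl := by
    ext x; cases x <;> simp [star', neighborSet, completeBipartiteGraph]
  rw [this, ← Nat.card_coe_set_eq, Nat.card_congr (Equiv.ofInjective _ Sum.inl_injective).symm]
  simp

def isoSumCongr {α β γ δ : Type} {G : SimpleGraph α} {G' : SimpleGraph β}
    {H : SimpleGraph γ} {H' : SimpleGraph δ} (φ : G ≃g H) (ψ : G' ≃g H') :
    G ⊕g G' ≃g H ⊕g H' where
  toEquiv := Equiv.sumCongr φ.toEquiv ψ.toEquiv
  map_rel_iff' := by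
    rintro (u|u) (v|v) <;> simp [φ.map_adj_iff, ψ.map_adj_iff]

def cardSumInl {α β : Type} (G : SimpleGraph α) (H : SimpleGraph β) (a : α) :
    gcard (G ⊕g H) (Sum.inl a) ≃g (gcard G a) ⊕g H where
  toEquiv :=
    (Equiv.subtypeSum (p := fun x => x ≠ Sum.inl a)).trans
      (Equiv.sumCongr
        (Equiv.subtypeEquiv (Equiv.refl α) (fun v => by simp))
        (Equiv.subtypeUnivEquiv (fun b => by simp)))
  map_rel_iff' := by
    rintro ⟨u|u, hu⟩ ⟨v|v, hv⟩ <;>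
      simp [gcard, Equiv.subtypeSum, Equiv.subtypeUnivEquiv] <;> exact Iff.rfl

def cardSumInr {α β : Type} (G : SimpleGraph α) (H : SimpleGraph β) (b : β) :
    gcard (G ⊕g H) (Sum.inr b) ≃g G ⊕g (gcard H b) where
  toEquiv :=
    (Equiv.subtypeSum (p := fun x => x ≠ Sum.inr b)).trans
      (Equiv.sumCongr
        (Equiv.subtypeUnivEquiv (fun v => by simp))
        (Equiv.subtypeEquiv (Equiv.refl β) (fun w => by simp)))
  map_rel_iff' := by
    rintro ⟨u|u, hu⟩ ⟨v|v, hv⟩ <;>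
      simp [gcard, Equiv.subtypeSum, Equiv.subtypeUnivEquiv] <;> exact Iff.rfl

noncomputable def starCard (q : ℕ) (j : Fin (q + 1)) :
    gcard (star' (q + 1)) (Sum.inr j) ≃g star' q where
  toEquiv :=
    (Equiv.subtypeSum (p := fun x => x ≠ Sum.inr j)).trans
      (Equiv.sumCongr
        (Equiv.subtypeUnivEquiv (fun v => by simp))
        (Fintype.equivFinOfCardEq (by
          rw [Fintype.card_subtype_compl]
          simp)))
  map_rel_iff' := by
    rintro ⟨u|u, hu⟩ ⟨v|v, hv⟩ <;>
      simp [gcard, star', completeBipartiteGraph, Equiv.subtypeSum, Equiv.subtypeUnivEquiv]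

lemma two_ecount {V : Type} [Fintype V] (G : SimpleGraph V) :
    2 * ecount G = ∑ v, gdeg G v := by
  classical
  have h := SimpleGraph.sum_degrees_eq_twice_card_edges G
  have h1 : ecount G = G.edgeFinset.card := by
    unfold ecount
    rw [Set.ncard_eq_toFinset_card']
    congr 1
  have h2 : ∀ v, gdeg G v = G.degree v := by
    intro v
    unfold gdeg
    rw [Set.ncard_eq_toFinset_card']
    simp [SimpleGraph.degree, SimpleGraph.neighborFinset]
  rw [h1, ← h]
  exact Finset.sum_congr rfl (fun v _ => (h2 v).symm)

lemma dcount_iso {V W : Type} {G : SimpleGraph V} {H : SimpleGraph W} (φ : G ≃g H) (t : ℕ) :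
    dcount G t = dcount H t := by
  unfold dcount
  have himg : {w : W | gdeg H w = t} = ⇑φ '' {v : V | gdeg G v = t} := by
    ext w
    simp only [Set.mem_image, Set.mem_setOf_eq]
    constructor
    · intro h
      refine ⟨φ.symm w, ?_, by simp⟩
      rw [gdeg_iso φ]
      simpa using h
    · rintro ⟨v, hv, rfl⟩
      rw [← gdeg_iso φ]
      exact hv
  rw [himg, Set.ncard_image_of_injective _ (φ.injective)]

lemma count_gdeg {V : Type} [Fintype V] [DecidableEq V] (K : SimpleGraph V) (t : ℕ) :
    Multiset.count t (Finset.univ.val.map fun v => gdeg K v) = dcount K t := by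
  classical
  unfold dcount
  rw [Set.ncard_eq_toFinset_card', Set.toFinset_setOf, Multiset.count_map,
    Finset.card, Finset.filter_val]
  exact congrArg Multiset.card (Multiset.filter_congr (fun x _ => eq_comm))

/-! ### The concrete graphs -/

abbrev TG (k : ℕ) : Type := ((Fin 1 ⊕ Fin (k+3)) ⊕ (Fin 1 ⊕ Fin (k+3))) ⊕ (Fin 1 ⊕ Fin (k+1))
abbrev TH (k : ℕ) : Type := ((Fin 1 ⊕ Fin (k+3)) ⊕ (Fin 1 ⊕ Fin (k+2))) ⊕ (Fin 1 ⊕ Fin (k+2))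

def bigG (k : ℕ) : SimpleGraph (TG k) := (star' (k+3) ⊕g star' (k+3)) ⊕g star' (k+1)
def bigH (k : ℕ) : SimpleGraph (TH k) := (star' (k+3) ⊕g star' (k+2)) ⊕g star' (k+2)

noncomputable def eG (k : ℕ) : Fin (3*(k+2)+4) ≃ TG k :=
  Fintype.equivOfCardEq (by simp; omega)
noncomputable def eH (k : ℕ) : Fin (3*(k+2)+4) ≃ TH k :=
  Fintype.equivOfCardEq (by simp; omega)

noncomputable def GG (k : ℕ) : SimpleGraph (Fin (3*(k+2)+4)) :=
  (bigG k).comap (eG k).toEmbedding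
noncomputable def HH (k : ℕ) : SimpleGraph (Fin (3*(k+2)+4)) :=
  (bigH k).comap (eH k).toEmbedding

noncomputable def φG (k : ℕ) : GG k ≃g bigG k := Iso.comap (eG k) (bigG k)
noncomputable def φH (k : ℕ) : HH k ≃g bigH k := Iso.comap (eH k) (bigH k)

lemma sum_gdeg_bigG (k : ℕ) : ∑ u, gdeg (bigG k) u = 6*k+14 := by
  simp [bigG, Fintype.sum_sum_type, gdeg_sum_inl, gdeg_sum_inr, gdeg_star_center,
    gdeg_star_leaf, Finset.sum_const]
  omega

lemma sum_gdeg_bigH (k : ℕ) : ∑ u, gdeg (bigH k) u = 6*k+14 := by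
  simp [bigH, Fintype.sum_sum_type, gdeg_sum_inl, gdeg_sum_inr, gdeg_star_center,
    gdeg_star_leaf, Finset.sum_const]
  omega

lemma dcount_bigG (k : ℕ) : dcount (bigG k) (k+3) = 2 := by
  have hset : {u : TG k | gdeg (bigG k) u = k+3} =
      {Sum.inl (Sum.inl (Sum.inl 0)), Sum.inl (Sum.inr (Sum.inl 0))} := by
    ext u
    rcases u with ((c|j)|(c|j))|(c|j) <;>
      simp [bigG, gdeg_sum_inl, gdeg_sum_inr, gdeg_star_center, gdeg_star_leaf,
        Fin.eq_zero]
  unfold dcount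
  rw [hset, Set.ncard_pair (by simp)]

lemma dcount_bigH (k : ℕ) : dcount (bigH k) (k+3) = 1 := by
  have hset : {u : TH k | gdeg (bigH k) u = k+3} =
      {Sum.inl (Sum.inl (Sum.inl 0))} := by
    ext u
    rcases u with ((c|j)|(c|j))|(c|j) <;>
      simp [bigH, gdeg_sum_inl, gdeg_sum_inr, gdeg_star_center, gdeg_star_leaf,
        Fin.eq_zero]
  unfold dcount
  rw [hset, Set.ncard_singleton]

/-! ### The shared-cards machinery -/

def trim (k : ℕ) (j : Fin (k+3)) : Fin (k+2) :=
  if h : (j : ℕ) < k + 2 then ⟨j, h⟩ else ⟨0, by omega⟩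

lemma trim_castLE (k : ℕ) (j : Fin (k+2)) : trim k (j.castLE (by omega)) = j := by
  have : ((j.castLE (by omega : k+2 ≤ k+3)) : ℕ) = (j : ℕ) := rfl
  simp only [trim, this, j.isLt, dif_pos]

noncomputable def sfun (k : ℕ) : Fin (k+2) ⊕ Fin (k+2) → Fin (3*(k+2)+4)
  | Sum.inl j => (eG k).symm (Sum.inl (Sum.inl (Sum.inr (j.castLE (by omega)))))
  | Sum.inr j => (eG k).symm (Sum.inl (Sum.inr (Sum.inr (j.castLE (by omega)))))

noncomputable def ffun (k : ℕ) : Fin (3*(k+2)+4) → Fin (3*(k+2)+4) := fun v =>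
  match eG k v with
  | Sum.inl (Sum.inl (Sum.inr j)) => (eH k).symm (Sum.inl (Sum.inr (Sum.inr (trim k j))))
  | Sum.inl (Sum.inr (Sum.inr j)) => (eH k).symm (Sum.inr (Sum.inr (trim k j)))
  | _ => v

lemma ffun_l (k : ℕ) (j : Fin (k+2)) :
    ffun k (sfun k (Sum.inl j)) = (eH k).symm (Sum.inl (Sum.inr (Sum.inr j))) := by
  unfold ffun sfun
  simp only [Equiv.apply_symm_apply, trim_castLE]

lemma ffun_r (k : ℕ) (j : Fin (k+2)) :
    ffun k (sfun k (Sum.inr j)) = (eH k).symm (Sum.inr (Sum.inr j)) := by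
  unfold ffun sfun
  simp only [Equiv.apply_symm_apply, trim_castLE]

lemma sfun_inj (k : ℕ) : Function.Injective (sfun k) := by
  intro a b h
  rcases a with a | a <;> rcases b with b | b <;>
    simp only [sfun] at h <;>
    have h2 := (eG k).symm.injective h <;>
    simp_all [Fin.castLE_inj]

lemma shares (k : ℕ) : SharesCards (GG k) (HH k) (2*(k+2)) := by
  classical
  refine ⟨Finset.image (sfun k) Finset.univ, ffun k, ?_, ?_, ?_⟩
  · rw [Finset.card_image_of_injective _ (sfun_inj k)]
    simp
    omega
  · intro u hu v hv h
    simp only [Finset.coe_image, Set.mem_image, Finset.coe_univ, Set.mem_univ, true_and,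
      Set.image_univ, Set.mem_range] at hu hv
    obtain ⟨a, rfl⟩ := hu
    obtain ⟨b, rfl⟩ := hv
    suffices hab : a = b by rw [hab]
    rcases a with a | a <;> rcases b with b | b <;>
      [rw [ffun_l, ffun_l] at h; rw [ffun_l, ffun_r] at h;
       rw [ffun_r, ffun_l] at h; rw [ffun_r, ffun_r] at h] <;>
      have h2 := (eH k).symm.injective h <;> simp_all
  · intro v hv
    simp only [Finset.mem_image, Finset.mem_univ, true_and] at hv
    obtain ⟨a, rfl⟩ := hv
    rcases a with j | j
    · rw [ffun_l]
      set jc : Fin (k+3) := j.castLE (by omega) with hjc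
      let X : TG k := Sum.inl (Sum.inl (Sum.inr jc))
      let Y : TH k := Sum.inl (Sum.inr (Sum.inr j))
      let isoL : gcard (bigG k) X ≃g (star' (k+2) ⊕g star' (k+3)) ⊕g star' (k+1) :=
        (cardSumInl (star' (k+3) ⊕g star' (k+3)) (star' (k+1)) (Sum.inl (Sum.inr jc))).trans
          (isoSumCongr
            ((cardSumInl (star' (k+3)) (star' (k+3)) (Sum.inr jc)).trans
              (isoSumCongr (starCard (k+2) jc) Iso.refl))
            Iso.refl)
      let p1 : (star' (k+2) ⊕g star' (k+3)) ⊕g star' (k+1) ≃g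
          (star' (k+3) ⊕g star' (k+2)) ⊕g star' (k+1) :=
        isoSumCongr Iso.sumComm Iso.refl
      let p2 : (star' (k+3) ⊕g star' (k+2)) ⊕g star' (k+1) ≃g
          star' (k+3) ⊕g (star' (k+2) ⊕g star' (k+1)) := Iso.sumAssoc
      let p3 : star' (k+3) ⊕g (star' (k+2) ⊕g star' (k+1)) ≃g
          star' (k+3) ⊕g (star' (k+1) ⊕g star' (k+2)) :=
        isoSumCongr Iso.refl Iso.sumComm
      let p4 : star' (k+3) ⊕g (star' (k+1) ⊕g star' (k+2)) ≃g
          (star' (k+3) ⊕g star' (k+1)) ⊕g star' (k+2) := Iso.sumAssoc.symm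
      let perm : (star' (k+2) ⊕g star' (k+3)) ⊕g star' (k+1) ≃g
          (star' (k+3) ⊕g star' (k+1)) ⊕g star' (k+2) :=
        p1.trans (p2.trans (p3.trans p4))
      let isoR : gcard (bigH k) Y ≃g (star' (k+3) ⊕g star' (k+1)) ⊕g star' (k+2) :=
        (cardSumInl (star' (k+3) ⊕g star' (k+2)) (star' (k+2)) (Sum.inr (Sum.inr j))).trans
          (isoSumCongr
            ((cardSumInr (star' (k+3)) (star' (k+2)) (Sum.inr j)).trans
              (isoSumCongr Iso.refl (starCard (k+1) j)))
            Iso.refl)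
      exact ⟨((isoGcard (φG k).symm X).symm.trans
        (isoL.trans (perm.trans (isoR.symm.trans (isoGcard (φH k).symm Y)))))⟩
    · rw [ffun_r]
      set jc : Fin (k+3) := j.castLE (by omega) with hjc
      let X : TG k := Sum.inl (Sum.inr (Sum.inr jc))
      let Y : TH k := Sum.inr (Sum.inr j)
      let isoL : gcard (bigG k) X ≃g (star' (k+3) ⊕g star' (k+2)) ⊕g star' (k+1) :=
        (cardSumInl (star' (k+3) ⊕g star' (k+3)) (star' (k+1)) (Sum.inr (Sum.inr jc))).trans
          (isoSumCongr
            ((cardSumInr (star' (k+3)) (star' (k+3)) (Sum.inr jc)).trans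
              (isoSumCongr Iso.refl (starCard (k+2) jc)))
            Iso.refl)
      let isoR : gcard (bigH k) Y ≃g (star' (k+3) ⊕g star' (k+2)) ⊕g star' (k+1) :=
        (cardSumInr (star' (k+3) ⊕g star' (k+2)) (star' (k+2)) (Sum.inr j)).trans
          (isoSumCongr Iso.refl (starCard (k+1) j))
      exact ⟨((isoGcard (φG k).symm X).symm.trans
        (isoL.trans (isoR.symm.trans (isoGcard (φH k).symm Y))))⟩

/-- Two graphs on `3p + 4` vertices — disjoint unions of stars
`K_{1,p+1} ⊔ K_{1,p+1} ⊔ K_{1,p-1}` and `K_{1,p+1} ⊔ K_{1,p} ⊔ K_{1,p}` — with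
the same number of edges `3p + 1` and different degree sequences, sharing at
least `2p` common cards. -/
theorem star_unions_share_cards (p : ℕ) (hp : 2 ≤ p) :
    ∃ G H : SimpleGraph (Fin (3 * p + 4)),
      Nonempty (G ≃g (star' (p + 1) ⊕g star' (p + 1) ⊕g star' (p - 1))) ∧
      Nonempty (H ≃g (star' (p + 1) ⊕g star' p ⊕g star' p)) ∧
      ecount G = 3 * p + 1 ∧ ecount H = 3 * p + 1 ∧
      (Finset.univ.val.map fun v => gdeg G v) ≠
        (Finset.univ.val.map fun v => gdeg H v) ∧
      dcount G (p + 1) = 2 ∧ dcount H (p + 1) = 1 ∧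
      SharesCards G H (2 * p) := by
  classical
  obtain ⟨k, rfl⟩ : ∃ k, p = k + 2 := ⟨p - 2, by omega⟩
  have hecG : ecount (GG k) = 3 * (k+2) + 1 := by
    have h2 : 2 * ecount (GG k) = 6*k+14 := by
      rw [two_ecount, ← sum_gdeg_bigG k, ← Equiv.sum_comp (eG k) (gdeg (bigG k))]
      exact Finset.sum_congr rfl fun v _ => gdeg_iso (φG k) v
    omega
  have hecH : ecount (HH k) = 3 * (k+2) + 1 := by
    have h2 : 2 * ecount (HH k) = 6*k+14 := by
      rw [two_ecount, ← sum_gdeg_bigH k, ← Equiv.sum_comp (eH k) (gdeg (bigH k))]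
      exact Finset.sum_congr rfl fun v _ => gdeg_iso (φH k) v
    omega
  have hdG : dcount (GG k) (k+3) = 2 := by
    rw [dcount_iso (φG k)]; exact dcount_bigG k
  have hdH : dcount (HH k) (k+3) = 1 := by
    rw [dcount_iso (φH k)]; exact dcount_bigH k
  refine ⟨GG k, HH k, ⟨φG k⟩, ⟨φH k⟩, hecG, hecH, ?_, hdG, hdH, shares k⟩
  intro h
  have hc := congrArg (Multiset.count (k+3)) h
  rw [count_gdeg, count_gdeg, hdG, hdH] at hc
  omega
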